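/- If (X, ≤) is a linear order admitting a non-identity surjective order-preserving self-map, then X admits at least continuum-many surjective order-preserving self-maps. -/

import Mathlib

open Function

namespace Stmt2Aux

/-- membership pattern: even numbers `2a` with `a ∈ A` -/
def Scond (A : Set ℕ) (m : ℕ) : Prop := m % 2 = 0 ∧ m / 2 ∈ A

noncomputable instance (A : Set ℕ) : DecidablePred (Scond A) :=
  fun _ => Classical.propDecidable _

noncomputable def cntA (A : Set ℕ) (n : ℕ) : ℕ :=
  ((Finset.range n).filter (Scond A)).card

lemma cntA_le (A : Set ℕ) (n : ℕ) : cntA A n ≤ n := by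
  simpa [cntA] using Finset.card_filter_le (Finset.range n) (Scond A)

lemma cntA_succ (A : Set ℕ) (n : ℕ) :
    cntA A (n + 1) = cntA A n + (if Scond A n then 1 else 0) := by
  unfold cntA
  rw [Finset.range_add_one, Finset.filter_insert]
  split
  · rw [Finset.card_insert_of_notMem (by simp)]
  · simp

lemma scond_iff (A : Set ℕ) (a : ℕ) : Scond A (2*a) ↔ a ∈ A := by
  unfold Scond
  have h1 : 2*a % 2 = 0 := by omega
  have h2 : 2*a / 2 = a := by omega
  rw [h1, h2]
  simp

lemma scond_odd (A : Set ℕ) (k : ℕ) : ¬ Scond A (2*k+1) := by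
  intro h
  have := h.1
  omega

lemma cntA_two_mul_le (A : Set ℕ) (k : ℕ) : cntA A (2*k) ≤ k := by
  induction k with
  | zero => simp [cntA]
  | succ k ih =>
    have h1 : 2*(k+1) = (2*k+1)+1 := by ring
    rw [h1, cntA_succ, if_neg (scond_odd A k), cntA_succ]
    split <;> omega

lemma exists_step (A : Set ℕ) (m : ℕ) :
    ∃ n, cntA A n ≤ n ∧ n - cntA A n = m ∧ cntA A (n+1) = cntA A n := by
  classical
  have hbig : ∃ N, m < N - cntA A N :=
    ⟨2*(m+1), by have h := cntA_two_mul_le A (m+1); omega⟩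
  have hN : m < Nat.find hbig - cntA A (Nat.find hbig) := Nat.find_spec hbig
  have hN0 : Nat.find hbig ≠ 0 := by
    intro h
    rw [h] at hN
    omega
  obtain ⟨n, hn⟩ : ∃ n, Nat.find hbig = n + 1 := ⟨Nat.find hbig - 1, by omega⟩
  have h1 : ¬ m < n - cntA A n := Nat.find_min hbig (by omega)
  rw [hn] at hN
  have hsucc := cntA_succ A n
  have hle := cntA_le A n
  have hite : cntA A (n+1) = cntA A n ∨ cntA A (n+1) = cntA A n + 1 := by
    rw [hsucc]; split <;> omega
  have hkey : n - cntA A n = m ∧ cntA A (n+1) = cntA A n := by omega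
  exact ⟨n, hle, hkey.1, hkey.2⟩

noncomputable def idx {X : Type*} [LinearOrder X] (d : ℕ → X) (y : X) : ℕ :=
  sInf {k | y < d k} - 1

open scoped Classical in
noncomputable def Hmap {X : Type*} [LinearOrder X] (f : X → X) (d : ℕ → X)
    (A : Set ℕ) (y : X) : X :=
  if d 0 ≤ y ∧ y < d (idx d y + 1) then
    f^[cntA A (idx d y)] (if Scond A (idx d y) then d (idx d y) else y)
  else y

lemma key {X : Type*} [LinearOrder X] (f : X → X) (hsurj : Function.Surjective f)
    (hmono : Monotone f) (c : X) (hc : f c < c) :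
    Cardinal.continuum ≤
      Cardinal.mk {g : X → X // Function.Surjective g ∧ Monotone g} := by
  classical
  choose s hs using hsurj
  set d : ℕ → X := fun n => s^[n] c with hd
  have hd0 : d 0 = c := rfl
  have hdsucc : ∀ n, d (n + 1) = s (d n) := by
    intro n
    simp only [hd, Function.iterate_succ_apply']
  have hfd : ∀ n, f (d (n + 1)) = d n := by
    intro n
    rw [hdsucc]
    exact hs _
  have hmono_d : StrictMono d := by
    apply strictMono_nat_of_lt_succ
    intro n
    induction n with
    | zero =>
      by_contra h
      push_neg at h
      have h2 : d 0 ≤ f c := by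
        calc d 0 = f (d 1) := (hfd 0).symm
          _ ≤ f (d 0) := hmono h
          _ = f c := by rw [hd0]
      rw [hd0] at h2
      exact absurd (h2.trans_lt hc) (lt_irrefl c)
    | succ n ih =>
      by_contra h
      push_neg at h
      have h2 : d (n+1) ≤ d n := by
        calc d (n+1) = f (d (n+2)) := (hfd _).symm
          _ ≤ f (d (n+1)) := hmono h
          _ = d n := hfd n
      exact absurd ih (not_lt.mpr h2)
  -- iterates of f on the chain
  have hiter : ∀ k n, k ≤ n → f^[k] (d n) = d (n - k) := by
    intro k
    induction k with
    | zero => intro n _; simp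
    | succ k ih =>
      intro n hkn
      obtain ⟨m, rfl⟩ : ∃ m, n = m + 1 := ⟨n - 1, by omega⟩
      rw [Function.iterate_succ_apply, hfd, ih m (by omega)]
      congr 1
      omega
  -- onto lemma
  have honto : ∀ (k n : ℕ), k ≤ n → ∀ t, d (n - k) ≤ t → t < d (n - k + 1) →
      ∃ y, d n ≤ y ∧ y < d (n+1) ∧ f^[k] y = t := by
    intro k
    induction k with
    | zero =>
      intro n _ t h1 h2
      exact ⟨t, by simpa using h1, by simpa using h2, rfl⟩
    | succ k ih =>
      intro n hkn t h1 h2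
      have hnk : 1 ≤ n - k := by omega
      have key_eq : f (d (n - k)) = d (n - k - 1) := by
        have h3 : n - k = (n - k - 1) + 1 := by omega
        conv_lhs => rw [h3]
        rw [hfd]
      have hidx1 : n - (k+1) = n - k - 1 := by omega
      have hidx2 : n - (k+1) + 1 = n - k := by omega
      rw [hidx1] at h1
      rw [hidx2] at h2
      obtain ⟨u₀, hu₀⟩ : ∃ u₀, f u₀ = t := ⟨s t, hs t⟩
      obtain ⟨u, hu1, hu2⟩ : ∃ u, d (n-k) ≤ u ∧ f u = t := by
        rcases le_or_gt (d (n-k)) u₀ with h | h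
        · exact ⟨u₀, h, hu₀⟩
        · have h4 : t ≤ d (n - k - 1) := by
            rw [← hu₀, ← key_eq]
            exact hmono h.le
          have ht : t = d (n - k - 1) := le_antisymm h4 h1
          exact ⟨d (n-k), le_rfl, by rw [key_eq, ht]⟩
      have hu3 : u < d (n - k + 1) := by
        by_contra hcon
        push_neg at hcon
        have h5 : d (n - k) ≤ f u := by
          calc d (n-k) = f (d (n-k+1)) := (hfd _).symm
            _ ≤ f u := hmono hcon
        rw [hu2] at h5
        exact absurd h2 (not_lt.mpr h5)
      obtain ⟨y, hy1, hy2, hy3⟩ := ih n (by omega) u hu1 hu3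
      exact ⟨y, hy1, hy2, by rw [Function.iterate_succ_apply', hy3, hu2]⟩
  -- index characterization
  have hidx : ∀ (y : X) (n : ℕ), d n ≤ y → y < d (n+1) → idx d y = n := by
    intro y n h1 h2
    have hinf : sInf {k | y < d k} = n + 1 := by
      apply le_antisymm
      · exact Nat.sInf_le h2
      · by_contra hcon
        push_neg at hcon
        have hmem0 : sInf {k | y < d k} ∈ {k | y < d k} := Nat.sInf_mem ⟨n+1, h2⟩
        have hmem : y < d (sInf {k | y < d k}) := hmem0
        have h3 : d (sInf {k | y < d k}) ≤ d n := hmono_d.monotone (by omega)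
        exact absurd (hmem.trans_le h3) (not_lt.mpr h1)
    unfold idx
    omega
  -- value of Hmap on intervals
  have hval : ∀ (A : Set ℕ) (n : ℕ) (y : X), d n ≤ y → y < d (n+1) →
      Hmap f d A y = f^[cntA A n] (if Scond A n then d n else y) := by
    intro A n y h1 h2
    have hi := hidx y n h1 h2
    unfold Hmap
    rw [hi, if_pos ⟨le_trans (hmono_d.monotone (Nat.zero_le n)) h1, h2⟩]
  have hidlow : ∀ (A : Set ℕ) (y : X), y < d 0 → Hmap f d A y = y := by
    intro A y hy
    unfold Hmap
    rw [if_neg]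
    intro h
    exact absurd h.1 (not_le.mpr hy)
  have hidtop : ∀ (A : Set ℕ) (y : X), (∀ k, d k ≤ y) → Hmap f d A y = y := by
    intro A y hy
    unfold Hmap
    rw [if_neg]
    intro h
    exact absurd h.2 (not_lt.mpr (hy _))
  -- trichotomy
  have tri : ∀ y : X, y < d 0 ∨ (∃ n, d n ≤ y ∧ y < d (n+1)) ∨ (∀ k, d k ≤ y) := by
    intro y
    rcases lt_or_ge y (d 0) with h0 | h0
    · exact Or.inl h0
    by_cases hex : ∃ k, y < d k
    · refine Or.inr (Or.inl ?_)
      have hmem0 : sInf {k | y < d k} ∈ {k | y < d k} := Nat.sInf_mem hex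
      have hmem : y < d (sInf {k | y < d k}) := hmem0
      have hN0 : sInf {k | y < d k} ≠ 0 := by
        intro h
        rw [h] at hmem
        exact absurd hmem (not_lt.mpr h0)
      refine ⟨sInf {k | y < d k} - 1, ?_, ?_⟩
      · have h3 : sInf {k | y < d k} - 1 ∉ {k | y < d k} :=
          Nat.notMem_of_lt_sInf (by omega)
        exact not_lt.mp h3
      · have h4 : sInf {k | y < d k} - 1 + 1 = sInf {k | y < d k} := by omega
        rw [h4]
        exact hmem
    · push_neg at hex
      exact Or.inr (Or.inr hex)
  -- upper / lower bounds
  have hub : ∀ (A : Set ℕ) (n : ℕ) (y : X), d n ≤ y → y < d (n+1) →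
      Hmap f d A y ≤ d (n + 1 - cntA A (n+1)) := by
    intro A n y h1 h2
    rw [hval A n y h1 h2]
    have hle := cntA_le A n
    by_cases hS : Scond A n
    · rw [if_pos hS, hiter _ _ hle]
      have h3 : n + 1 - cntA A (n+1) = n - cntA A n := by
        rw [cntA_succ, if_pos hS]
        omega
      rw [h3]
    · rw [if_neg hS]
      have h3 : f^[cntA A n] y ≤ f^[cntA A n] (d (n+1)) := (hmono.iterate _) h2.le
      rw [hiter _ _ (by omega : cntA A n ≤ n+1)] at h3
      have h4 : n + 1 - cntA A (n+1) = n + 1 - cntA A n := by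
        rw [cntA_succ, if_neg hS]
        omega
      rw [h4]
      exact h3
  have hlb : ∀ (A : Set ℕ) (n : ℕ) (y : X), d n ≤ y → y < d (n+1) →
      d (n - cntA A n) ≤ Hmap f d A y := by
    intro A n y h1 h2
    rw [hval A n y h1 h2, ← hiter _ _ (cntA_le A n)]
    apply hmono.iterate
    split
    · exact le_rfl
    · exact h1
  -- monotonicity of n - cntA A n
  have hg : ∀ (A : Set ℕ), Monotone (fun n => n - cntA A n) := by
    intro A
    apply monotone_nat_of_le_succ
    intro n
    have h1 := cntA_le A n
    have h2 : cntA A (n+1) ≤ cntA A n + 1 := by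
      rw [cntA_succ]
      split <;> omega
    show n - cntA A n ≤ (n+1) - cntA A (n+1)
    omega
  -- Hmap is monotone
  have hmonoH : ∀ A, Monotone (Hmap f d A) := by
    intro A y z hyz
    rcases tri y with hy0 | ⟨n, hn1, hn2⟩ | hytop
    · rw [hidlow A y hy0]
      rcases tri z with hz0 | ⟨m, hm1, hm2⟩ | hztop
      · rw [hidlow A z hz0]
        exact hyz
      · exact le_trans (le_trans hy0.le (hmono_d.monotone (Nat.zero_le _))) (hlb A m z hm1 hm2)
      · rw [hidtop A z hztop]
        exact hyz
    · rcases tri z with hz0 | ⟨m, hm1, hm2⟩ | hztop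
      · exact absurd (lt_of_le_of_lt (le_trans (le_trans (hmono_d.monotone (Nat.zero_le n)) hn1) hyz) hz0) (lt_irrefl _)
      · have hnm : n ≤ m := by
          by_contra hcon
          push_neg at hcon
          have h3 : z < d n := lt_of_lt_of_le hm2 (hmono_d.monotone (by omega))
          exact absurd (le_trans hn1 hyz) (not_le.mpr h3)
        rcases eq_or_lt_of_le hnm with rfl | hlt
        · rw [hval A n y hn1 hn2, hval A n z hm1 hm2]
          apply hmono.iterate
          split
          · exact le_rfl
          · exact hyz
        · refine le_trans (hub A n y hn1 hn2) (le_trans ?_ (hlb A m z hm1 hm2))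
          exact hmono_d.monotone (hg A (by omega : n+1 ≤ m))
      · rw [hidtop A z hztop]
        refine le_trans (hub A n y hn1 hn2) ?_
        refine le_trans (hmono_d.monotone (by omega : n + 1 - cntA A (n+1) ≤ n+1)) (hztop (n+1))
    · have hztop : ∀ k, d k ≤ z := fun k => le_trans (hytop k) hyz
      rw [hidtop A y hytop, hidtop A z hztop]
      exact hyz
  -- Hmap is surjective
  have hsurjH : ∀ A, Function.Surjective (Hmap f d A) := by
    intro A t
    rcases tri t with h0 | ⟨m, hm1, hm2⟩ | htop
    · exact ⟨t, hidlow A t h0⟩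
    · obtain ⟨n, hcle, hgn, hcnteq⟩ := exists_step A m
      have hSn : ¬ Scond A n := by
        intro hS
        rw [cntA_succ, if_pos hS] at hcnteq
        omega
      obtain ⟨y, hy1, hy2, hy3⟩ := honto (cntA A n) n hcle t (by rw [hgn]; exact hm1) (by rw [hgn]; exact hm2)
      exact ⟨y, by rw [hval A n y hy1 hy2, if_neg hSn, hy3]⟩
    · exact ⟨t, hidtop A t htop⟩
  -- values at chain points
  have hvald : ∀ (A : Set ℕ) (n : ℕ), Hmap f d A (d n) = d (n - cntA A n) := by
    intro A n
    rw [hval A n (d n) le_rfl (hmono_d (Nat.lt_succ_self n)), ite_self,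
      hiter _ _ (cntA_le A n)]
  -- the injection
  set e : Set ℕ → {g : X → X // Function.Surjective g ∧ Monotone g} :=
    fun A => ⟨Hmap f d A, hsurjH A, hmonoH A⟩ with he
  have hinj : Function.Injective e := by
    intro A B hAB
    have hfun : Hmap f d A = Hmap f d B := congrArg Subtype.val hAB
    have hcnt : ∀ n, cntA A n = cntA B n := by
      intro n
      have h1 := congrFun hfun (d n)
      rw [hvald, hvald] at h1
      have h2 := hmono_d.injective h1
      have h3 := cntA_le A n
      have h4 := cntA_le B n
      omega
    ext a
    have h2 := hcnt (2*a+1)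
    have h1 := hcnt (2*a)
    rw [cntA_succ, cntA_succ] at h2
    rw [h1] at h2
    have h5 : (if Scond A (2*a) then 1 else 0) = (if Scond B (2*a) then 1 else 0) := by omega
    simp only [scond_iff] at h5
    by_cases hA : a ∈ A <;> by_cases hB : a ∈ B <;> simp_all
  refine le_trans (le_of_eq ?_)
    (Cardinal.mk_le_of_injective (f := fun A : ULift (Set ℕ) => e A.down) ?_)
  · rw [Cardinal.mk_uLift, Cardinal.mk_set, Cardinal.mk_nat, Cardinal.two_power_aleph0,
      Cardinal.lift_continuum]
  · intro a b hab
    have := hinj hab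
    exact ULift.ext _ _ this

end Stmt2Aux

theorem stmt_2 {X : Type*} [LinearOrder X] (f : X → X)
    (hsurj : Function.Surjective f) (hmono : Monotone f) (hne : f ≠ id) :
    Cardinal.continuum ≤
      Cardinal.mk {g : X → X // Function.Surjective g ∧ Monotone g} := by
  obtain ⟨c, hc⟩ : ∃ c, f c ≠ c := by
    by_contra h
    push_neg at h
    exact hne (funext h)
  rcases hc.lt_or_gt with h | h
  · exact Stmt2Aux.key f hsurj hmono c h
  · -- dual case : c < f c
    have hkey := Stmt2Aux.key (X := Xᵒᵈ)
      (fun x => OrderDual.toDual (f (OrderDual.ofDual x)))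
      (fun x => by
        obtain ⟨y, hy⟩ := hsurj (OrderDual.ofDual x)
        exact ⟨OrderDual.toDual y, congrArg OrderDual.toDual hy⟩)
      (fun a b hab => hmono hab)
      (OrderDual.toDual c)
      (by exact h)
    refine le_trans hkey (Cardinal.mk_le_of_injective
      (f := fun g : {g : Xᵒᵈ → Xᵒᵈ // Function.Surjective g ∧ Monotone g} =>
        (⟨fun x => OrderDual.ofDual (g.1 (OrderDual.toDual x)),
          fun x => by
            obtain ⟨y, hy⟩ := g.2.1 (OrderDual.toDual x)
            exact ⟨OrderDual.ofDual y, congrArg OrderDual.ofDual hy⟩,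
          fun a b hab => g.2.2 (by exact hab)⟩ :
          {g : X → X // Function.Surjective g ∧ Monotone g})) ?_)
    intro g₁ g₂ hg
    apply Subtype.ext
    funext x
    exact congrFun (congrArg Subtype.val hg) x
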